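/- Let G = (V,E) be a connected, locally finite simple graph, x ∈ V a fixed base vertex, u : V → ℝ harmonic, and k ≥ 1 an integer. Suppose there is an integer d ≥ 1 such that d_in(v) = d = d_out(v) for every vertex v with k − 1 ≤ d(x,v) ≤ k + 1. Then ∑_{y : d(x,y)=k+1} u(y)² − 2·∑_{y : d(x,y)=k} u(y)² + ∑_{y : d(x,y)=k−1} u(y)² ≥ 0. -/

import Mathlib

/-- In-degree of `v` relative to base vertex `x`: the number of neighbors of `v`
whose distance to `x` is one less than that of `v`. -/
noncomputable def din {V : Type*} (G : SimpleGraph V) (x v : V) : ℕ :=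
  {w | G.Adj v w ∧ G.dist x w = G.dist x v - 1}.ncard

/-- Out-degree of `v` relative to base vertex `x`: the number of neighbors of `v`
whose distance to `x` is one more than that of `v`. -/
noncomputable def dout {V : Type*} (G : SimpleGraph V) (x v : V) : ℕ :=
  {w | G.Adj v w ∧ G.dist x w = G.dist x v + 1}.ncard

/-- `u` is harmonic: at every vertex the sum of differences over neighbors vanishes. -/
def GraphHarmonic {V : Type*} (G : SimpleGraph V) (u : V → ℝ) : Prop :=
  ∀ v : V, ∑ᶠ y ∈ G.neighborSet v, (u y - u v) = 0

lemma sphere_finite' {V : Type*} (G : SimpleGraph V) (hconn : G.Connected)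
    (hlf : ∀ v : V, (G.neighborSet v).Finite) (x : V) :
    ∀ n : ℕ, {y | G.dist x y = n}.Finite := by
  intro n
  induction n with
  | zero =>
    refine (Set.finite_singleton x).subset ?_
    intro y hy
    simp only [Set.mem_setOf_eq] at hy
    have := (hconn.dist_eq_zero_iff (u := x) (v := y)).mp hy
    simp [this]
  | succ n ih =>
    refine (ih.biUnion (fun w _ => hlf w)).subset ?_
    intro y hy
    simp only [Set.mem_setOf_eq] at hy
    obtain ⟨p, hp⟩ := (hconn y x).exists_walk_length_eq_dist
    have hd : G.dist y x = n + 1 := by rwa [SimpleGraph.dist_comm]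
    rw [hd] at hp
    cases p with
    | nil => simp at hp
    | @cons _ b _ h q =>
      have hq : q.length = n := by simpa using hp
      have h1 : G.dist x b ≤ n := by
        have := SimpleGraph.dist_le q.reverse
        simpa [hq] using this
      have h2 : G.dist x b = n := by
        have t := hconn.dist_triangle (u := x) (v := b) (w := y)
        have hb : G.dist b y = 1 := SimpleGraph.dist_eq_one_iff_adj.mpr h.symm
        rw [hy, hb] at t
        omega
      refine Set.mem_biUnion (show b ∈ {y | G.dist x y = n} from h2) ?_
      exact h.symm

set_option maxHeartbeats 1600000

/-- if `d_in(v) = d = d_out(v)` for all vertices `v` with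
`k−1 ≤ d(x,v) ≤ k+1` (with `k ≥ 1`, `d ≥ 1`), then for harmonic `u` the sphere energies
are convex: `∑_{d(x,y)=k+1} u(y)² − 2∑_{d(x,y)=k} u(y)² + ∑_{d(x,y)=k−1} u(y)² ≥ 0`. -/
theorem sphere_energy_convex {V : Type*} (G : SimpleGraph V) (hconn : G.Connected)
    (hlf : ∀ v : V, (G.neighborSet v).Finite) (x : V) (u : V → ℝ)
    (hu : GraphHarmonic G u) (k : ℕ) (hk : 1 ≤ k) (d : ℕ) (hd : 1 ≤ d)
    (hreg : ∀ v : V, k - 1 ≤ G.dist x v → G.dist x v ≤ k + 1 →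
      din G x v = d ∧ dout G x v = d) :
    (∑ᶠ y ∈ {y | G.dist x y = k + 1}, u y ^ 2) -
        2 * (∑ᶠ y ∈ {y | G.dist x y = k}, u y ^ 2) +
        (∑ᶠ y ∈ {y | G.dist x y = k - 1}, u y ^ 2) ≥ 0 := by
  classical
  have hfin : ∀ n : ℕ, {y | G.dist x y = n}.Finite := sphere_finite' G hconn hlf x
  set S0 : Finset V := (hfin (k-1)).toFinset with hS0def
  set S1 : Finset V := (hfin k).toFinset with hS1def
  set S2 : Finset V := (hfin (k+1)).toFinset with hS2def
  have mS0 : ∀ w, w ∈ S0 ↔ G.dist x w = k - 1 := by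
    intro w; simp [hS0def, Set.Finite.mem_toFinset]
  have mS1 : ∀ w, w ∈ S1 ↔ G.dist x w = k := by
    intro w; simp [hS1def, Set.Finite.mem_toFinset]
  have mS2 : ∀ w, w ∈ S2 ↔ G.dist x w = k + 1 := by
    intro w; simp [hS2def, Set.Finite.mem_toFinset]
  -- rewrite the goal as Finset sums
  rw [finsum_mem_eq_finite_toFinset_sum _ (hfin (k+1)),
      finsum_mem_eq_finite_toFinset_sum _ (hfin k),
      finsum_mem_eq_finite_toFinset_sum _ (hfin (k-1))]
  set Q0 : ℝ := ∑ w ∈ S0, u w ^ 2 with hQ0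
  set Q1 : ℝ := ∑ w ∈ S1, u w ^ 2 with hQ1
  set Q2 : ℝ := ∑ w ∈ S2, u w ^ 2 with hQ2
  -- edge-boundary finsets
  set E0 : V → Finset V := fun v => S0.filter (fun w => G.Adj v w) with hE0
  set E1 : V → Finset V := fun v => S1.filter (fun w => G.Adj v w) with hE1
  set E2 : V → Finset V := fun v => S2.filter (fun w => G.Adj v w) with hE2
  -- counting lemmas
  have hcard_in : ∀ v : V, G.dist x v = k → (E0 v).card = d := by
    intro v hv
    have h := (hreg v (by omega) (by omega)).1
    rw [← h, din, ← Set.ncard_coe_finset]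
    congr 1
    ext w
    simp only [hE0, Finset.coe_filter, Set.mem_setOf_eq, hS0def,
      Set.Finite.mem_toFinset, Set.mem_setOf_eq, hv]
    tauto
  have hcard_out : ∀ v : V, G.dist x v = k → (E2 v).card = d := by
    intro v hv
    have h := (hreg v (by omega) (by omega)).2
    rw [← h, dout, ← Set.ncard_coe_finset]
    congr 1
    ext w
    simp only [hE2, Finset.coe_filter, Set.mem_setOf_eq, hS2def,
      Set.Finite.mem_toFinset, Set.mem_setOf_eq, hv]
    tauto
  have hcard_out0 : ∀ w : V, G.dist x w = k - 1 → (E1 w).card = d := by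
    intro w hw
    have h := (hreg w (by omega) (by omega)).2
    rw [← h, dout, ← Set.ncard_coe_finset]
    congr 1
    ext z
    simp only [hE1, Finset.coe_filter, Set.mem_setOf_eq, hS1def,
      Set.Finite.mem_toFinset, Set.mem_setOf_eq, hw]
    have : k - 1 + 1 = k := by omega
    rw [this]
    tauto
  have hcard_in2 : ∀ y : V, G.dist x y = k + 1 → (E1 y).card = d := by
    intro y hy
    have h := (hreg y (by omega) (by omega)).1
    rw [← h, din, ← Set.ncard_coe_finset]
    congr 1
    ext z
    simp only [hE1, Finset.coe_filter, Set.mem_setOf_eq, hS1def,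
      Set.Finite.mem_toFinset, Set.mem_setOf_eq, hy]
    have : k + 1 - 1 = k := by omega
    rw [this]
    tauto
  -- neighbor finset
  set N : V → Finset V := fun v => (hlf v).toFinset with hN
  have mN : ∀ v w, w ∈ N v ↔ G.Adj v w := by
    intro v w; simp [hN, Set.Finite.mem_toFinset]
  -- partition of neighbors of a vertex at distance k
  have hpart : ∀ v : V, G.dist x v = k → N v = (E0 v ∪ E1 v) ∪ E2 v := by
    intro v hv
    ext w
    simp only [Finset.mem_union, hE0, hE1, hE2, Finset.mem_filter, mN, mS0, mS1, mS2]
    constructor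
    · intro hadj
      have hdw : G.dist v w = 1 := SimpleGraph.dist_eq_one_iff_adj.mpr hadj
      have t1 := hconn.dist_triangle (u := x) (v := w) (w := v)
      have t2 := hconn.dist_triangle (u := x) (v := v) (w := w)
      rw [hv, SimpleGraph.dist_comm (u := w)] at t1
      rw [hv] at t2
      rw [hdw] at t1 t2
      have : G.dist x w = k - 1 ∨ G.dist x w = k ∨ G.dist x w = k + 1 := by omega
      tauto
    · tauto
  have hdisj01 : ∀ v : V, Disjoint (E0 v) (E1 v) := by
    intro v
    rw [Finset.disjoint_left]
    intro a ha hb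
    simp only [hE0, hE1, Finset.mem_filter] at ha hb
    have h0 := (mS0 a).mp ha.1
    have h1 := (mS1 a).mp hb.1
    omega
  have hdisj2 : ∀ v : V, Disjoint (E0 v ∪ E1 v) (E2 v) := by
    intro v
    rw [Finset.disjoint_left]
    intro a ha hb
    simp only [hE0, hE1, hE2, Finset.mem_union, Finset.mem_filter] at ha hb
    have h2 := (mS2 a).mp hb.1
    rcases ha with ha | ha
    · have := (mS0 a).mp ha.1; omega
    · have := (mS1 a).mp ha.1; omega
  -- harmonicity as a Finset identity
  have hharm : ∀ v : V, G.dist x v = k →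
      ∑ w ∈ E0 v, u w + ∑ w ∈ E1 v, u w + ∑ w ∈ E2 v, u w
        = ((E0 v).card + (E1 v).card + (E2 v).card : ℝ) * u v := by
    intro v hv
    have h := hu v
    rw [show G.neighborSet v = ↑(N v) from (Set.Finite.coe_toFinset (hlf v)).symm,
      finsum_mem_coe_finset] at h
    rw [Finset.sum_sub_distrib, Finset.sum_const, sub_eq_zero] at h
    have hsplit : ∑ w ∈ N v, u w = ∑ w ∈ E0 v, u w + ∑ w ∈ E1 v, u w + ∑ w ∈ E2 v, u w := by
      rw [hpart v hv, Finset.sum_union (hdisj2 v), Finset.sum_union (hdisj01 v)]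
    have hcardsplit : (N v).card = (E0 v).card + (E1 v).card + (E2 v).card := by
      rw [hpart v hv, Finset.card_union_of_disjoint (hdisj2 v),
        Finset.card_union_of_disjoint (hdisj01 v)]
    rw [hsplit, hcardsplit] at h
    rw [h]
    push_cast
    ring
  -- double counting swap
  have swap : ∀ (P Q : Finset V) (f : V → V → ℝ),
      ∑ v ∈ P, ∑ w ∈ Q.filter (fun w => G.Adj v w), f v w
        = ∑ w ∈ Q, ∑ v ∈ P.filter (fun v => G.Adj v w), f v w := by
    intro P Q f
    simp only [Finset.sum_filter]
    exact Finset.sum_comm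
  have hfiltercomm : ∀ (P : Finset V) (w : V),
      P.filter (fun v => G.Adj v w) = P.filter (fun v => G.Adj w v) := by
    intro P w
    apply Finset.filter_congr
    intro v _
    simp [G.adj_comm]
  -- key sums
  set A : ℝ := ∑ v ∈ S1, ∑ w ∈ E0 v, u w * u v with hA
  set B : ℝ := ∑ v ∈ S1, ∑ w ∈ E2 v, u w * u v with hB
  set H : ℝ := ∑ v ∈ S1, ∑ w ∈ E1 v, u w * u v with hH
  set C : ℝ := ∑ v ∈ S1, ((E1 v).card : ℝ) * u v ^ 2 with hC
  -- Claim 1 : A + H + B = 2d*Q1 + C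
  have claim1 : A + H + B = 2 * d * Q1 + C := by
    rw [hA, hB, hH, hC, hQ1]
    rw [← Finset.sum_add_distrib, ← Finset.sum_add_distrib, Finset.mul_sum,
      ← Finset.sum_add_distrib]
    apply Finset.sum_congr rfl
    intro v hv
    have hv' := (mS1 v).mp hv
    have := hharm v hv'
    have e0 : ∑ w ∈ E0 v, u w * u v = (∑ w ∈ E0 v, u w) * u v := by
      rw [Finset.sum_mul]
    have e1 : ∑ w ∈ E1 v, u w * u v = (∑ w ∈ E1 v, u w) * u v := by
      rw [Finset.sum_mul]
    have e2 : ∑ w ∈ E2 v, u w * u v = (∑ w ∈ E2 v, u w) * u v := by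
      rw [Finset.sum_mul]
    rw [e0, e1, e2, ← add_mul, ← add_mul, this, hcard_in v hv', hcard_out v hv']
    ring
  -- Claim 2 : H ≤ C
  have claim2 : H ≤ C := by
    have perc : ∀ v : V, ((E1 v).card : ℝ) * u v ^ 2 + (∑ w ∈ E1 v, u w ^ 2)
        - 2 * ∑ w ∈ E1 v, u w * u v = ∑ w ∈ E1 v, (u v - u w) ^ 2 := by
      intro v
      rw [Finset.mul_sum,
        show ((E1 v).card : ℝ) * u v ^ 2 = ∑ _w ∈ E1 v, u v ^ 2 by
          rw [Finset.sum_const, nsmul_eq_mul],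
        ← Finset.sum_add_distrib, ← Finset.sum_sub_distrib]
      exact Finset.sum_congr rfl fun w _ => by ring
    have swapped : ∑ v ∈ S1, ∑ w ∈ E1 v, u w ^ 2 = C := by
      rw [hE1, swap S1 S1 (fun _ w => u w ^ 2), hC]
      apply Finset.sum_congr rfl
      intro w hw
      rw [Finset.sum_const, nsmul_eq_mul, hfiltercomm S1 w]
    have expand : C + C - 2 * H = ∑ v ∈ S1, ∑ w ∈ E1 v, (u v - u w) ^ 2 := by
      nth_rewrite 2 [← swapped]
      rw [hC, hH, Finset.mul_sum, ← Finset.sum_add_distrib, ← Finset.sum_sub_distrib]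
      exact Finset.sum_congr rfl fun v _ => perc v
    have key : 0 ≤ ∑ v ∈ S1, ∑ w ∈ E1 v, (u v - u w) ^ 2 :=
      Finset.sum_nonneg fun v _ => Finset.sum_nonneg fun w _ => sq_nonneg _
    rw [← expand] at key
    linarith
  -- Claim 3 : A ≤ d/2 * (Q0 + Q1)
  have sumww : ∑ v ∈ S1, ∑ w ∈ E0 v, u w ^ 2 = d * Q0 := by
    rw [hE0, swap S1 S0 (fun _ w => u w ^ 2), hQ0, Finset.mul_sum]
    apply Finset.sum_congr rfl
    intro w hw
    rw [Finset.sum_const, nsmul_eq_mul, hfiltercomm S1 w]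
    have : (S1.filter (fun v => G.Adj w v)).card = d := hcard_out0 w ((mS0 w).mp hw)
    rw [this]
  have sumvv0 : ∑ v ∈ S1, ∑ _w ∈ E0 v, u v ^ 2 = d * Q1 := by
    rw [hQ1, Finset.mul_sum]
    apply Finset.sum_congr rfl
    intro v hv
    rw [Finset.sum_const, nsmul_eq_mul, hcard_in v ((mS1 v).mp hv)]
  have claim3 : A ≤ (d : ℝ) / 2 * (Q0 + Q1) := by
    have step : A ≤ (∑ v ∈ S1, ∑ w ∈ E0 v, (u w ^ 2 + u v ^ 2) / 2) := by
      rw [hA]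
      apply Finset.sum_le_sum
      intro v _
      apply Finset.sum_le_sum
      intro w _
      nlinarith [sq_nonneg (u w - u v)]
    have : ∑ v ∈ S1, ∑ w ∈ E0 v, (u w ^ 2 + u v ^ 2) / 2
        = (∑ v ∈ S1, ∑ w ∈ E0 v, u w ^ 2) / 2 + (∑ v ∈ S1, ∑ _w ∈ E0 v, u v ^ 2) / 2 := by
      rw [← add_div, ← Finset.sum_add_distrib, Finset.sum_div]
      apply Finset.sum_congr rfl
      intro v _
      rw [← Finset.sum_add_distrib, Finset.sum_div]
    rw [this, sumww, sumvv0] at step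
    linarith
  -- Claim 4 : B ≤ d/2 * (Q2 + Q1)
  have sumww2 : ∑ v ∈ S1, ∑ w ∈ E2 v, u w ^ 2 = d * Q2 := by
    rw [hE2, swap S1 S2 (fun _ w => u w ^ 2), hQ2, Finset.mul_sum]
    apply Finset.sum_congr rfl
    intro w hw
    rw [Finset.sum_const, nsmul_eq_mul, hfiltercomm S1 w]
    have : (S1.filter (fun v => G.Adj w v)).card = d := hcard_in2 w ((mS2 w).mp hw)
    rw [this]
  have sumvv2 : ∑ v ∈ S1, ∑ _w ∈ E2 v, u v ^ 2 = d * Q1 := by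
    rw [hQ1, Finset.mul_sum]
    apply Finset.sum_congr rfl
    intro v hv
    rw [Finset.sum_const, nsmul_eq_mul, hcard_out v ((mS1 v).mp hv)]
  have claim4 : B ≤ (d : ℝ) / 2 * (Q2 + Q1) := by
    have step : B ≤ (∑ v ∈ S1, ∑ w ∈ E2 v, (u w ^ 2 + u v ^ 2) / 2) := by
      rw [hB]
      apply Finset.sum_le_sum
      intro v _
      apply Finset.sum_le_sum
      intro w _
      nlinarith [sq_nonneg (u w - u v)]
    have : ∑ v ∈ S1, ∑ w ∈ E2 v, (u w ^ 2 + u v ^ 2) / 2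
        = (∑ v ∈ S1, ∑ w ∈ E2 v, u w ^ 2) / 2 + (∑ v ∈ S1, ∑ _w ∈ E2 v, u v ^ 2) / 2 := by
      rw [← add_div, ← Finset.sum_add_distrib, Finset.sum_div]
      apply Finset.sum_congr rfl
      intro v _
      rw [← Finset.sum_add_distrib, Finset.sum_div]
    rw [this, sumww2, sumvv2] at step
    linarith
  -- combine
  have hdpos : (0 : ℝ) < d := by exact_mod_cast hd
  have final : (d : ℝ) * (Q2 - 2 * Q1 + Q0) ≥ 0 := by nlinarith
  nlinarith
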